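/- arXiv:2404.17442 — 3 statements merged into one kernel-verified Lean document; each statement's English description precedes it below -/
import Mathlib

section
/- (Desymmetrization inequality) For a fixed hypothesis set W and a loss ℓ bounded in [0,B], E_S[sup_{w∈W} |R̂_S(w) − R(w)|] ≥ (1/2)·Rad(W) − B/(2√n), where Rad(W) = E_S[Rad_S(W)] is the expected Rademacher complexity. -/
open MeasureTheory ProbabilityTheory

lemma myBiSup_le {W : Type*} {Ws : Set W} {f : W → ℝ} {c : ℝ} (hc : 0 ≤ c)
    (h : ∀ w ∈ Ws, f w ≤ c) : (⨆ w ∈ Ws, f w) ≤ c :=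
  Real.iSup_le (fun w => Real.iSup_le (fun hw => h w hw) hc) hc

lemma myLe_biSup {W : Type*} {Ws : Set W} {f : W → ℝ} {c : ℝ} (hc : 0 ≤ c)
    (h : ∀ w, f w ≤ c) {w : W} (hw : w ∈ Ws) : f w ≤ ⨆ w ∈ Ws, f w := by
  have h1 : f w = ⨆ _ : w ∈ Ws, f w := by
    haveI : Nonempty (w ∈ Ws) := ⟨hw⟩
    exact ciSup_const.symm
  rw [h1]
  apply le_ciSup (f := fun w => ⨆ _ : w ∈ Ws, f w)
  refine ⟨c, ?_⟩
  rintro x ⟨w', rfl⟩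
  exact Real.iSup_le (fun _ => h w') hc

lemma sign_sq_sum (n : ℕ) :
    ∑ ε : Fin n → Bool, (∑ i, (if ε i then (1:ℝ) else -1))^2 = 2^n * n := by
  classical
  have hcard : ∑ _ε : Fin n → Bool, (1:ℝ) = 2^n := by
    simp [Finset.card_univ]
  have key : ∀ i j : Fin n, i ≠ j →
      ∑ ε : Fin n → Bool, (if ε i then (1:ℝ) else -1) * (if ε j then (1:ℝ) else -1) = 0 := by
    intro i j hij
    have hinv : ∀ ε : Fin n → Bool,
        Function.update (Function.update ε i (!(ε i))) i (!((Function.update ε i (!(ε i))) i)) = ε := by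
      intro ε
      simp [Function.update_self, Function.update_idem]
    let e : (Fin n → Bool) ≃ (Fin n → Bool) :=
      ⟨fun ε => Function.update ε i (!(ε i)), fun ε => Function.update ε i (!(ε i)),
        fun ε => hinv ε, fun ε => hinv ε⟩
    have hswap : ∑ ε : Fin n → Bool, (if ε i then (1:ℝ) else -1) * (if ε j then (1:ℝ) else -1)
        = ∑ ε : Fin n → Bool, (if e ε i then (1:ℝ) else -1) * (if e ε j then (1:ℝ) else -1) := by
      exact (Fintype.sum_equiv e _ _ (fun ε => rfl)).symm
    have hflip : ∀ ε : Fin n → Bool,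
        (if e ε i then (1:ℝ) else -1) * (if e ε j then (1:ℝ) else -1)
        = -((if ε i then (1:ℝ) else -1) * (if ε j then (1:ℝ) else -1)) := by
      intro ε
      have h1 : e ε i = !(ε i) := by simp [e, Function.update_self]
      have h2 : e ε j = ε j := by simp [e, Function.update_of_ne (Ne.symm hij)]
      rw [h1, h2]
      cases ε i <;> cases ε j <;> norm_num
    rw [Finset.sum_congr rfl (fun ε _ => hflip ε), Finset.sum_neg_distrib] at hswap
    linarith
  have expand : ∀ ε : Fin n → Bool, (∑ i, (if ε i then (1:ℝ) else -1))^2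
      = ∑ i, ∑ j, (if ε i then (1:ℝ) else -1) * (if ε j then (1:ℝ) else -1) := by
    intro ε
    rw [sq, Finset.sum_mul_sum]
  rw [Finset.sum_congr rfl (fun ε _ => expand ε), Finset.sum_comm]
  rw [Finset.sum_congr rfl (fun i _ => Finset.sum_comm)]
  have inner : ∀ i j : Fin n,
      ∑ ε : Fin n → Bool, (if ε i then (1:ℝ) else -1) * (if ε j then (1:ℝ) else -1)
      = if j = i then (2:ℝ)^n else 0 := by
    intro i j
    by_cases h : j = i
    · subst h
      rw [if_pos rfl, ← hcard]
      apply Finset.sum_congr rfl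
      intro ε _
      cases ε j <;> norm_num
    · rw [if_neg h]
      exact key i j (fun hh => h hh.symm)
  calc ∑ i : Fin n, ∑ j : Fin n, ∑ ε : Fin n → Bool,
        (if ε i then (1:ℝ) else -1) * (if ε j then (1:ℝ) else -1)
      = ∑ i : Fin n, ∑ j : Fin n, if j = i then (2:ℝ)^n else 0 := by
        exact Finset.sum_congr rfl fun i _ => Finset.sum_congr rfl fun j _ => inner i j
    _ = ∑ _i : Fin n, (2:ℝ)^n := by
        refine Finset.sum_congr rfl fun i _ => ?_
        simp
    _ = 2^n * n := by simp [mul_comm]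

lemma sign_abs_sum (n : ℕ) :
    ∑ ε : Fin n → Bool, |∑ i, (if ε i then (1:ℝ) else -1)| ≤ 2^n * Real.sqrt n := by
  classical
  set s := ∑ ε : Fin n → Bool, |∑ i, (if ε i then (1:ℝ) else -1)| with hs
  have hs0 : 0 ≤ s := Finset.sum_nonneg fun ε _ => abs_nonneg _
  have h1 := Finset.sum_mul_sq_le_sq_mul_sq Finset.univ
    (fun ε : Fin n → Bool => |∑ i, (if ε i then (1:ℝ) else -1)|) (fun _ => 1)
  have h2 : ∑ ε : Fin n → Bool, |∑ i, (if ε i then (1:ℝ) else -1)|^2 = 2^n * n := by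
    rw [← sign_sq_sum n]
    exact Finset.sum_congr rfl fun ε _ => sq_abs _
  have h3 : s^2 ≤ (2^n * n) * 2^n := by
    calc s^2 ≤ (∑ ε : Fin n → Bool, (∑ i, (if ε i then (1:ℝ) else -1))^2) * 2^n := by
          simpa [Finset.card_univ] using h1
      _ = (2^n * n) * 2^n := by rw [sign_sq_sum n]
  have h4 : s = Real.sqrt (s^2) := (Real.sqrt_sq hs0).symm
  have h5 : Real.sqrt (s^2) ≤ Real.sqrt ((2^n * n) * 2^n) := Real.sqrt_le_sqrt h3
  have h6 : ((2:ℝ)^n * n) * 2^n = ((2:ℝ)^n)^2 * n := by ring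
  have h7 : Real.sqrt (((2:ℝ)^n)^2 * n) = 2^n * Real.sqrt n := by
    rw [Real.sqrt_mul (sq_nonneg _), Real.sqrt_sq (by positivity)]
  rw [h4]
  rw [h6, h7] at h5
  exact h5

lemma measurable_select {Z : Type*} [MeasurableSpace Z] {n : ℕ} (A : Finset (Fin n)) :
    Measurable (fun p : (Fin n → Z) × (Fin n → Z) => fun i => if i ∈ A then p.1 i else p.2 i) := by
  apply measurable_pi_lambda
  intro i
  by_cases h : i ∈ A
  · simpa [h, Function.comp_def] using (measurable_pi_apply i).comp (measurable_fst :
      Measurable fun p : (Fin n → Z) × (Fin n → Z) => p.1)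
  · simpa [h, Function.comp_def] using (measurable_pi_apply i).comp (measurable_snd :
      Measurable fun p : (Fin n → Z) × (Fin n → Z) => p.2)

lemma measurePreserving_select {Z : Type*} [MeasurableSpace Z] (μz : Measure Z)
    [IsProbabilityMeasure μz] (n : ℕ) (A : Finset (Fin n)) :
    MeasurePreserving (fun p : (Fin n → Z) × (Fin n → Z) => fun i => if i ∈ A then p.1 i else p.2 i)
      ((Measure.pi fun _ : Fin n => μz).prod (Measure.pi fun _ : Fin n => μz))
      (Measure.pi fun _ : Fin n => μz) := by
  classical
  refine ⟨measurable_select A, ?_⟩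
  symm
  apply Measure.pi_eq
  intro s hs
  rw [Measure.map_apply (measurable_select A) (MeasurableSet.univ_pi hs)]
  have hpre : (fun p : (Fin n → Z) × (Fin n → Z) => fun i => if i ∈ A then p.1 i else p.2 i) ⁻¹'
      (Set.univ.pi s)
      = (Set.univ.pi fun i => if i ∈ A then s i else Set.univ) ×ˢ
        (Set.univ.pi fun i => if i ∈ A then Set.univ else s i) := by
    ext p
    simp only [Set.mem_preimage, Set.mem_pi, Set.mem_univ, forall_true_left, Set.mem_prod]
    constructor
    · intro h
      constructor <;> intro i <;> by_cases hi : i ∈ A <;> simp [hi] <;> simpa [hi] using h i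
    · rintro ⟨h1, h2⟩ i
      by_cases hi : i ∈ A
      · simpa [hi] using h1 i
      · simpa [hi] using h2 i
  rw [hpre, Measure.prod_prod, Measure.pi_pi, Measure.pi_pi, ← Finset.prod_mul_distrib]
  apply Finset.prod_congr rfl
  intro i _
  by_cases hi : i ∈ A <;> simp [hi]

lemma measurePreserving_evalFin {Z : Type*} [MeasurableSpace Z] (μz : Measure Z)
    [IsProbabilityMeasure μz] (n : ℕ) (i : Fin n) :
    MeasurePreserving (fun S : Fin n → Z => S i) (Measure.pi fun _ : Fin n => μz) μz := by
  classical
  refine ⟨measurable_pi_apply i, ?_⟩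
  ext s hs
  rw [Measure.map_apply (measurable_pi_apply i) hs]
  have hpre : (fun S : Fin n → Z => S i) ⁻¹' s
      = Set.univ.pi (fun j => if j = i then s else Set.univ) := by
    ext S
    simp only [Set.mem_preimage, Set.mem_pi, Set.mem_univ, forall_true_left]
    constructor
    · intro h j
      by_cases hj : j = i <;> simp [hj, h]
    · intro h
      simpa using h i
  rw [hpre, Measure.pi_pi]
  have : ∀ j : Fin n, μz (if j = i then s else Set.univ) = if j = i then μz s else 1 := by
    intro j; split_ifs <;> simp
  rw [Finset.prod_congr rfl (fun j _ => this j)]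
  simp

/-- Empirical Rademacher complexity (uniform average over sign vectors). -/
noncomputable def empRad {W Z : Type*} (ℓ : W → Z → ℝ) (Ws : Set W) {n : ℕ}
    (S : Fin n → Z) : ℝ :=
  (1 / (n : ℝ)) *
    ((∑ ε : Fin n → Bool, ⨆ w ∈ Ws, ∑ i, (if ε i then (1 : ℝ) else -1) * ℓ w (S i)) / 2 ^ n)

/-- Desymmetrization inequality: for a fixed hypothesis set `Ws` and a loss bounded in `[0,B]`,
`E_S sup_{w ∈ Ws} |R̂_S(w) - R(w)| ≥ (1/2) E_S[Rad_S(Ws)] - B/(2√n)`. -/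
theorem stmt3 {W Z : Type*} [MeasurableSpace Z] (μz : Measure Z) [IsProbabilityMeasure μz]
    (ℓ : W → Z → ℝ) (Ws : Set W) (B : ℝ) (hB : 0 ≤ B)
    (hbdd : ∀ w z, ℓ w z ∈ Set.Icc 0 B) (hmeas : ∀ w, Measurable (ℓ w))
    (n : ℕ) (hn : 0 < n)
    (hInt1 : Integrable
      (fun S : Fin n → Z =>
        ⨆ w ∈ Ws, |(1 / (n : ℝ)) * ∑ i, ℓ w (S i) - ∫ z, ℓ w z ∂μz|)
      (Measure.pi fun _ : Fin n => μz))
    (hInt2 : Integrable (fun S : Fin n → Z => empRad ℓ Ws S)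
      (Measure.pi fun _ : Fin n => μz)) :
    (∫ S, ⨆ w ∈ Ws, |(1 / (n : ℝ)) * ∑ i, ℓ w (S i) - ∫ z, ℓ w z ∂μz|
        ∂(Measure.pi fun _ : Fin n => μz)) ≥
      (1 / 2) * (∫ S, empRad ℓ Ws S ∂(Measure.pi fun _ : Fin n => μz)) -
        B / (2 * Real.sqrt n) := by
  classical
  have hn' : (0:ℝ) < n := by exact_mod_cast hn
  set μn : Measure (Fin n → Z) := Measure.pi fun _ : Fin n => μz with hμn
  -- abbreviations (note: `R`, `g` are definitionally the terms in the statement)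
  let R : W → ℝ := fun w => ∫ z, ℓ w z ∂μz
  let g : (Fin n → Z) → ℝ := fun S => ⨆ w ∈ Ws, |(1 / (n : ℝ)) * ∑ i, ℓ w (S i) - R w|
  have hInt1' : Integrable g μn := hInt1
  -- basic facts
  have hIntℓ : ∀ w, Integrable (ℓ w) μz := by
    intro w
    refine (integrable_const B).mono' (hmeas w).aestronglyMeasurable (ae_of_all _ fun z => ?_)
    rw [Real.norm_eq_abs, abs_of_nonneg (hbdd w z).1]
    exact (hbdd w z).2
  have hR01 : ∀ w, R w ∈ Set.Icc (0:ℝ) B := by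
    intro w
    constructor
    · exact integral_nonneg fun z => (hbdd w z).1
    · calc R w ≤ ∫ _, B ∂μz :=
          integral_mono (hIntℓ w) (integrable_const B) (fun z => (hbdd w z).2)
        _ = B := by simp
  have hEmp01 : ∀ (w : W) (S : Fin n → Z), (1 / (n : ℝ)) * ∑ i, ℓ w (S i) ∈ Set.Icc (0:ℝ) B := by
    intro w S
    have hsum : ∑ i, ℓ w (S i) ≤ n * B := by
      calc ∑ i, ℓ w (S i) ≤ ∑ _i : Fin n, B :=
            Finset.sum_le_sum fun i _ => (hbdd w (S i)).2
        _ = n * B := by simp [mul_comm]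
    constructor
    · exact mul_nonneg (by positivity) (Finset.sum_nonneg fun i _ => (hbdd w (S i)).1)
    · have step1 : (1 / (n : ℝ)) * ∑ i, ℓ w (S i) ≤ (1 / (n : ℝ)) * (n * B) :=
        mul_le_mul_of_nonneg_left hsum (by positivity)
      have step2 : (1 / (n : ℝ)) * ((n:ℝ) * B) = B := by field_simp
      linarith
  have habsB : ∀ (w : W) (S : Fin n → Z), |(1 / (n : ℝ)) * ∑ i, ℓ w (S i) - R w| ≤ B := by
    intro w S
    have h1 := hEmp01 w S
    have h2 := hR01 w
    rw [abs_le]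
    constructor <;> [linarith [h1.1, h2.2]; linarith [h1.2, h2.1]]
  have hg_nonneg : ∀ S, 0 ≤ g S := fun S => Real.iSup_nonneg fun w =>
    Real.iSup_nonneg fun _ => abs_nonneg _
  -- measurable representative of g
  let gm : (Fin n → Z) → ℝ := hInt1'.1.mk g
  have hgm_meas : StronglyMeasurable gm := hInt1'.1.stronglyMeasurable_mk
  have hgm_eq : g =ᵐ[μn] gm := hInt1'.1.ae_eq_mk
  have hgmInt : Integrable gm μn := hInt1'.congr hgm_eq
  -- the combining maps
  let T : Finset (Fin n) → ((Fin n → Z) × (Fin n → Z)) → (Fin n → Z) :=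
    fun A p i => if i ∈ A then p.1 i else p.2 i
  have hT : ∀ A : Finset (Fin n), MeasurePreserving (T A) (μn.prod μn) μn := fun A =>
    measurePreserving_select μz n A
  have hcompInt : ∀ A : Finset (Fin n), Integrable (fun p => gm (T A p)) (μn.prod μn) := fun A =>
    ((hT A).integrable_comp hgm_meas.aestronglyMeasurable).mpr hgmInt
  let I : Finset (Fin n) → (Fin n → Z) → ℝ := fun A S => ∫ S', gm (T A (S, S')) ∂μn
  have hIint : ∀ A : Finset (Fin n), Integrable (I A) μn := fun A =>
    (hcompInt A).integral_prod_left
  have hG : ∀ A : Finset (Fin n), ∫ S, I A S ∂μn = ∫ S, g S ∂μn := by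
    intro A
    have h1 : ∫ S, I A S ∂μn = ∫ p, gm (T A p) ∂(μn.prod μn) :=
      (integral_prod _ (hcompInt A)).symm
    rw [h1]
    have h2 : ∫ p, gm (T A p) ∂(μn.prod μn) = ∫ y, gm y ∂(Measure.map (T A) (μn.prod μn)) :=
      (integral_map (hT A).measurable.aemeasurable
        (by rw [(hT A).map_eq]; exact hgm_meas.aestronglyMeasurable)).symm
    rw [h2, (hT A).map_eq]
    exact (integral_congr_ae hgm_eq).symm
  have haeprod : ∀ A : Finset (Fin n), ∀ᵐ p ∂(μn.prod μn), g (T A p) = gm (T A p) := by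
    intro A
    have := ae_eq_comp (μ := μn.prod μn) (f := T A) (hT A).measurable.aemeasurable
      (g := g) (g' := gm) (by rw [(hT A).map_eq]; exact hgm_eq)
    exact this
  -- the ghost-sample (symmetrization) bound
  have hghost : ∀ (A : Finset (Fin n)) (σ : ℝ), σ = 1 ∨ σ = -1 →
      ∀ᵐ S ∂μn, (∀ w ∈ Ws, σ * (∑ i ∈ A, (ℓ w (S i) - R w)) ≤ n * I A S) ∧ 0 ≤ I A S := by
    intro A σ hσ
    have hσ1 : |σ| = 1 := by rcases hσ with h | h <;> simp [h]
    filter_upwards [(hcompInt A).prod_right_ae, Measure.ae_ae_of_ae_prod (haeprod A)]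
      with S hSint hSeq
    have hInonneg : 0 ≤ I A S := by
      apply integral_nonneg_of_ae
      filter_upwards [hSeq] with S' h
      rw [← h]; exact hg_nonneg _
    refine ⟨?_, hInonneg⟩
    intro w hw
    set F : (Fin n → Z) → ℝ := fun S' => σ * ((∑ i, ℓ w (T A (S, S') i)) - n * R w) with hF
    have hTSmeas : Measurable (fun S' : Fin n → Z => T A (S, S')) :=
      (hT A).measurable.comp (measurable_const.prodMk measurable_id)
    have hFmeas : Measurable F := by
      rw [hF]
      apply Measurable.const_mul
      apply Measurable.sub _ measurable_const
      apply Finset.measurable_sum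
      intro i _
      exact (hmeas w).comp ((measurable_pi_apply i).comp hTSmeas)
    have hsumbd : ∀ S' : Fin n → Z, |∑ i, ℓ w (T A (S, S') i)| ≤ n * B := by
      intro S'
      rw [abs_of_nonneg (Finset.sum_nonneg fun i _ => (hbdd w _).1)]
      calc ∑ i, ℓ w (T A (S, S') i) ≤ ∑ _i : Fin n, B :=
            Finset.sum_le_sum fun i _ => (hbdd w _).2
        _ = n * B := by simp [mul_comm]
    have hFbd : ∀ S', ‖F S'‖ ≤ (n:ℝ) * B + n * B := by
      intro S'
      rw [Real.norm_eq_abs]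
      have h0 : |F S'| = |(∑ i, ℓ w (T A (S, S') i)) - (n:ℝ) * R w| := by
        rw [hF]; simp only; rw [abs_mul, hσ1, one_mul]
      have h2 : |(n:ℝ) * R w| ≤ n * B := by
        rw [abs_of_nonneg (mul_nonneg n.cast_nonneg (hR01 w).1)]
        exact mul_le_mul_of_nonneg_left (hR01 w).2 n.cast_nonneg
      have h3 := abs_sub (∑ i, ℓ w (T A (S, S') i)) ((n:ℝ) * R w)
      have h4 := hsumbd S'
      rw [h0]
      linarith
    have hFint : Integrable F μn :=
      (integrable_const ((n:ℝ) * B + n * B)).mono' hFmeas.aestronglyMeasurable (ae_of_all _ hFbd)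
    have hcoordInt : ∀ i : Fin n, Integrable (fun S' : Fin n → Z => ℓ w (T A (S, S') i)) μn := by
      intro i
      by_cases hi : i ∈ A
      · have h0 : (fun S' : Fin n → Z => ℓ w (T A (S, S') i)) = fun _ => ℓ w (S i) := by
          funext S'; show ℓ w (if i ∈ A then S i else S' i) = _; rw [if_pos hi]
        rw [h0]; exact integrable_const _
      · have h0 : (fun S' : Fin n → Z => ℓ w (T A (S, S') i)) = (ℓ w) ∘ (fun S' => S' i) := by
          funext S'; show ℓ w (if i ∈ A then S i else S' i) = _; rw [if_neg hi]; rfl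
        rw [h0, hμn]
        exact ((measurePreserving_evalFin μz n i).integrable_comp
          (hmeas w).aestronglyMeasurable).mpr (hIntℓ w)
    have hEvalInt : ∀ i : Fin n, ∫ S', ℓ w (T A (S, S') i) ∂μn
        = if i ∈ A then ℓ w (S i) else R w := by
      intro i
      by_cases hi : i ∈ A
      · rw [if_pos hi]
        have h0 : (fun S' : Fin n → Z => ℓ w (T A (S, S') i)) = fun _ => ℓ w (S i) := by
          funext S'; show ℓ w (if i ∈ A then S i else S' i) = _; rw [if_pos hi]
        rw [show (∫ S', ℓ w (T A (S, S') i) ∂μn)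
            = ∫ _S', ℓ w (S i) ∂μn from by rw [← h0]]
        simp
      · rw [if_neg hi]
        have h0 : (fun S' : Fin n → Z => ℓ w (T A (S, S') i)) = (ℓ w) ∘ (fun S' => S' i) := by
          funext S'; show ℓ w (if i ∈ A then S i else S' i) = _; rw [if_neg hi]; rfl
        rw [show (∫ S', ℓ w (T A (S, S') i) ∂μn)
            = ∫ S', ((ℓ w) ∘ (fun S'' => S'' i)) S' ∂μn from by rw [← h0]]
        have h1 : ∫ S', ((ℓ w) ∘ (fun S'' => S'' i)) S' ∂μn
            = ∫ z, ℓ w z ∂(Measure.map (fun S' : Fin n → Z => S' i) μn) := by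
          refine (integral_map (measurable_pi_apply i).aemeasurable ?_).symm
          rw [hμn, (measurePreserving_evalFin μz n i).map_eq]
          exact (hmeas w).aestronglyMeasurable
        rw [h1, hμn, (measurePreserving_evalFin μz n i).map_eq]
    have hkey : ∫ S', F S' ∂μn = σ * ∑ i ∈ A, (ℓ w (S i) - R w) := by
      have e1 : ∫ S', F S' ∂μn
          = σ * ((∑ i, ∫ S', ℓ w (T A (S, S') i) ∂μn) - (n:ℝ) * R w) := by
        simp only [hF]
        rw [integral_const_mul]
        congr 1
        rw [integral_sub (integrable_finset_sum _ (fun i _ => hcoordInt i)) (integrable_const _)]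
        congr 1
        · exact integral_finset_sum _ (fun i _ => hcoordInt i)
        · simp
      rw [e1]
      congr 1
      rw [Finset.sum_congr rfl (fun i (_ : i ∈ Finset.univ) => hEvalInt i)]
      have e3 : ∑ i ∈ A, (ℓ w (S i) - R w)
          = ∑ i : Fin n, (if i ∈ A then ℓ w (S i) - R w else 0) := by
        rw [Finset.sum_ite_mem, Finset.univ_inter]
      have e4 : (n:ℝ) * R w = ∑ _i : Fin n, R w := by simp [mul_comm]
      rw [e3, e4, ← Finset.sum_sub_distrib]
      apply Finset.sum_congr rfl
      intro i _
      by_cases hi : i ∈ A <;> simp [hi]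
    have hptwise : ∀ᵐ S' ∂μn, F S' ≤ (n:ℝ) * gm (T A (S, S')) := by
      filter_upwards [hSeq] with S' hS'
      have hb0 : |F S'| = |(∑ i, ℓ w (T A (S, S') i)) - (n:ℝ) * R w| := by
        rw [hF]; simp only; rw [abs_mul, hσ1, one_mul]
      have hb1 : F S' ≤ |(∑ i, ℓ w (T A (S, S') i)) - (n:ℝ) * R w| := by
        rw [← hb0]; exact le_abs_self _
      have hb2 : |(∑ i, ℓ w (T A (S, S') i)) - (n:ℝ) * R w|
          = (n:ℝ) * |(1 / (n : ℝ)) * (∑ i, ℓ w (T A (S, S') i)) - R w| := by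
        rw [show (n:ℝ) * |(1 / (n : ℝ)) * (∑ i, ℓ w (T A (S, S') i)) - R w|
            = |(n:ℝ)| * |(1 / (n : ℝ)) * (∑ i, ℓ w (T A (S, S') i)) - R w| from by
              rw [abs_of_nonneg (le_of_lt hn')]]
        rw [← abs_mul]
        congr 1
        field_simp
      have hb3 : |(1 / (n : ℝ)) * (∑ i, ℓ w (T A (S, S') i)) - R w| ≤ g (T A (S, S')) :=
        myLe_biSup hB (fun w' => habsB w' _) hw
      have hb4 : (n:ℝ) * |(1 / (n : ℝ)) * (∑ i, ℓ w (T A (S, S') i)) - R w|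
          ≤ (n:ℝ) * g (T A (S, S')) :=
        mul_le_mul_of_nonneg_left hb3 (le_of_lt hn')
      rw [hS'] at hb4
      linarith
    have hfin : ∫ S', F S' ∂μn ≤ (n:ℝ) * I A S := by
      have h5 : ∫ S', F S' ∂μn ≤ ∫ S', (n:ℝ) * gm (T A (S, S')) ∂μn :=
        integral_mono_ae hFint (hSint.const_mul _) hptwise
      have h6 : ∫ S', (n:ℝ) * gm (T A (S, S')) ∂μn = (n:ℝ) * I A S :=
        integral_const_mul _ _
      linarith
    rw [hkey] at hfin
    exact hfin
  -- per sign-vector decomposition and bound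
  let Aset : (Fin n → Bool) → Finset (Fin n) := fun ε => Finset.univ.filter (fun i => ε i = true)
  let c : (Fin n → Bool) → ℝ := fun ε => ∑ i, (if ε i then (1:ℝ) else -1)
  have hmain : ∀ᵐ S ∂μn, ∀ ε : Fin n → Bool,
      (⨆ w ∈ Ws, ∑ i, (if ε i then (1:ℝ) else -1) * ℓ w (S i))
        ≤ (n:ℝ) * I (Aset ε) S + (n:ℝ) * I (Aset ε)ᶜ S + B * |c ε| := by
    rw [ae_all_iff]
    intro ε
    filter_upwards [hghost (Aset ε) 1 (Or.inl rfl), hghost (Aset ε)ᶜ (-1) (Or.inr rfl)]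
      with S h1 h2
    have hRHS0 : 0 ≤ (n:ℝ) * I (Aset ε) S + (n:ℝ) * I (Aset ε)ᶜ S + B * |c ε| :=
      add_nonneg (add_nonneg (mul_nonneg n.cast_nonneg h1.2) (mul_nonneg n.cast_nonneg h2.2))
        (mul_nonneg hB (abs_nonneg _))
    apply myBiSup_le hRHS0
    intro w hw
    have e1 := h1.1 w hw
    have e2 := h2.1 w hw
    have e3 : R w * c ε ≤ B * |c ε| := by
      rcases le_total 0 (c ε) with h | h
      · rw [abs_of_nonneg h]
        exact mul_le_mul_of_nonneg_right (hR01 w).2 h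
      · rw [abs_of_nonpos h]
        have h4 : R w * c ε ≤ 0 := mul_nonpos_of_nonneg_of_nonpos (hR01 w).1 h
        nlinarith [(hR01 w).1]
    have edec : ∑ i, (if ε i then (1:ℝ) else -1) * ℓ w (S i)
        = (1:ℝ) * (∑ i ∈ Aset ε, (ℓ w (S i) - R w))
          + (-1:ℝ) * (∑ i ∈ (Aset ε)ᶜ, (ℓ w (S i) - R w)) + R w * c ε := by
      have d1 : ∑ i ∈ Aset ε, (ℓ w (S i) - R w)
          = ∑ i : Fin n, (if ε i = true then ℓ w (S i) - R w else 0) :=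
        Finset.sum_filter _ _
      have d2 : ∑ i ∈ (Aset ε)ᶜ, (ℓ w (S i) - R w)
          = ∑ i : Fin n, (if ε i = true then 0 else ℓ w (S i) - R w) := by
        have hc2 : (Aset ε)ᶜ = Finset.univ.filter (fun i => ¬ (ε i = true)) := by
          ext i; simp [Aset]
        rw [hc2, Finset.sum_filter]
        apply Finset.sum_congr rfl
        intro i _
        by_cases h : ε i = true <;> simp [h]
      have d4 : R w * c ε = ∑ i : Fin n, R w * (if ε i then (1:ℝ) else -1) := by
        rw [Finset.mul_sum]
      rw [d1, d2, d4, one_mul, neg_one_mul, ← Finset.sum_neg_distrib,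
        ← Finset.sum_add_distrib, ← Finset.sum_add_distrib]
      apply Finset.sum_congr rfl
      intro i _
      by_cases h : ε i = true <;> simp [h] <;> ring
    rw [edec]
    linarith
  -- putting it together
  set G : ℝ := ∫ S, g S ∂μn with hGdef
  have hG0 : 0 ≤ G := integral_nonneg hg_nonneg
  let u : (Fin n → Bool) → (Fin n → Z) → ℝ := fun ε S =>
    (n:ℝ) * I (Aset ε) S + (n:ℝ) * I (Aset ε)ᶜ S + B * |c ε|
  have hu_int : ∀ ε, Integrable (u ε) μn := fun ε =>
    (((hIint _).const_mul _).add ((hIint _).const_mul _)).add (integrable_const _)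
  have hu_val : ∀ ε, ∫ S, u ε S ∂μn = 2 * n * G + B * |c ε| := by
    intro ε
    have hadd : ∫ S, u ε S ∂μn
        = (∫ S, ((n:ℝ) * I (Aset ε) S + (n:ℝ) * I (Aset ε)ᶜ S) ∂μn)
          + ∫ _S, B * |c ε| ∂μn :=
      integral_add (((hIint _).const_mul _).add ((hIint _).const_mul _)) (integrable_const _)
    have hadd2 : ∫ S, ((n:ℝ) * I (Aset ε) S + (n:ℝ) * I (Aset ε)ᶜ S) ∂μn
        = (∫ S, (n:ℝ) * I (Aset ε) S ∂μn) + ∫ S, (n:ℝ) * I (Aset ε)ᶜ S ∂μn :=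
      integral_add ((hIint _).const_mul _) ((hIint _).const_mul _)
    rw [hadd, hadd2, integral_const_mul, integral_const_mul, hG (Aset ε), hG (Aset ε)ᶜ,
      integral_const]
    simp [measure_univ]
    ring
  have hSumInt : Integrable (fun S => ∑ ε : Fin n → Bool,
      ⨆ w ∈ Ws, ∑ i, (if ε i then (1:ℝ) else -1) * ℓ w (S i)) μn := by
    have heq : (fun S => ∑ ε : Fin n → Bool,
        ⨆ w ∈ Ws, ∑ i, (if ε i then (1:ℝ) else -1) * ℓ w (S i))
        = fun S => ((n:ℝ) * 2^n) * empRad ℓ Ws S := by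
      funext S
      rw [empRad]
      field_simp
    rw [heq]
    exact hInt2.const_mul _
  have hSumU_int : Integrable (fun S => ∑ ε : Fin n → Bool, u ε S) μn :=
    integrable_finset_sum _ (fun ε _ => hu_int ε)
  have hstep : ∫ S, (∑ ε : Fin n → Bool,
        ⨆ w ∈ Ws, ∑ i, (if ε i then (1:ℝ) else -1) * ℓ w (S i)) ∂μn
      ≤ ∑ ε : Fin n → Bool, (2 * n * G + B * |c ε|) := by
    have h1 : ∫ S, (∑ ε : Fin n → Bool,
          ⨆ w ∈ Ws, ∑ i, (if ε i then (1:ℝ) else -1) * ℓ w (S i)) ∂μn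
        ≤ ∫ S, (∑ ε : Fin n → Bool, u ε S) ∂μn :=
      integral_mono_ae hSumInt hSumU_int (hmain.mono fun S h => Finset.sum_le_sum fun ε _ => h ε)
    have h2 : ∫ S, (∑ ε : Fin n → Bool, u ε S) ∂μn = ∑ ε : Fin n → Bool, ∫ S, u ε S ∂μn :=
      integral_finset_sum _ (fun ε _ => hu_int ε)
    rw [h2, Finset.sum_congr rfl (fun ε _ => hu_val ε)] at h1
    exact h1
  have habs := sign_abs_sum n
  have hsum2 : ∑ ε : Fin n → Bool, (2 * (n:ℝ) * G + B * |c ε|)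
      ≤ 2^n * (2 * n * G) + B * (2^n * Real.sqrt n) := by
    rw [Finset.sum_add_distrib, Finset.sum_const, Finset.card_univ]
    have hcard : (Fintype.card (Fin n → Bool)) = 2^n := by simp
    have hterm1 : (Fintype.card (Fin n → Bool)) • (2 * (n:ℝ) * G) = 2^n * (2 * n * G) := by
      rw [hcard, nsmul_eq_mul]
      push_cast
      ring
    have hterm2 : ∑ ε : Fin n → Bool, B * |c ε| ≤ B * (2^n * Real.sqrt n) := by
      rw [← Finset.mul_sum]
      exact mul_le_mul_of_nonneg_left habs hB
    rw [hterm1]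
    linarith
  have hEmpEq : ∫ S, empRad ℓ Ws S ∂μn
      = (1 / ((n:ℝ) * 2^n)) * ∫ S, (∑ ε : Fin n → Bool,
          ⨆ w ∈ Ws, ∑ i, (if ε i then (1:ℝ) else -1) * ℓ w (S i)) ∂μn := by
    have heq2 : (fun S : Fin n → Z => empRad ℓ Ws S)
        = fun S => (1 / ((n:ℝ) * 2^n)) * (∑ ε : Fin n → Bool,
            ⨆ w ∈ Ws, ∑ i, (if ε i then (1:ℝ) else -1) * ℓ w (S i)) := by
      funext S
      rw [empRad]
      ring
    rw [heq2, integral_const_mul]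
  set E := ∫ S, empRad ℓ Ws S ∂μn with hEdef
  have hs0 : (0:ℝ) < Real.sqrt n := Real.sqrt_pos.2 hn'
  have hs2 : (Real.sqrt n)^2 = (n:ℝ) := Real.sq_sqrt (le_of_lt hn')
  have hfinal : E ≤ 2 * G + B / Real.sqrt n := by
    rw [hEmpEq]
    have h3 : (1 / ((n:ℝ) * 2^n)) * ∫ S, (∑ ε : Fin n → Bool,
          ⨆ w ∈ Ws, ∑ i, (if ε i then (1:ℝ) else -1) * ℓ w (S i)) ∂μn
        ≤ (1 / ((n:ℝ) * 2^n)) * (2^n * (2 * n * G) + B * (2^n * Real.sqrt n)) :=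
      mul_le_mul_of_nonneg_left (le_trans hstep hsum2) (by positivity)
    have h4 : (1 / ((n:ℝ) * 2^n)) * ((2:ℝ)^n * (2 * n * G) + B * (2^n * Real.sqrt n))
        = 2 * G + B * Real.sqrt n / n := by
      have h2n : (2:ℝ)^n ≠ 0 := by positivity
      field_simp
    have h5 : B * Real.sqrt n / n = B / Real.sqrt n := by
      rw [div_eq_div_iff hn'.ne' hs0.ne']
      nlinarith [hs2]
    linarith
  have hBs : B / Real.sqrt n = 2 * (B / (2 * Real.sqrt n)) := by
    field_simp
  have hgoal : G ≥ 1 / 2 * E - B / (2 * Real.sqrt n) := by linarith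
  exact hgoal
end

section
/- (Exponential McDiarmid inequality) Let f : X^n → ℝ satisfy the bounded difference property with constants c₁,…,cₙ: changing the i-th coordinate changes f by at most cᵢ. Then for i.i.d. random variables X₁,…,Xₙ on X and Z = f(X₁,…,Xₙ), for every λ ∈ ℝ, E[exp(λ(Z − E[Z]))] ≤ exp((λ²/8)·Σᵢ cᵢ²). -/
open MeasureTheory Real


private lemma mcd_D_pos {p : ℝ} (hp0 : 0 ≤ p) (hp1 : p ≤ 1) (t : ℝ) :
    0 < 1 - p + p * Real.exp t := by
  rcases eq_or_lt_of_le hp1 with h | h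
  · subst h; simpa using Real.exp_pos t
  · have : 0 ≤ p * Real.exp t := mul_nonneg hp0 (Real.exp_pos t).le
    linarith

private lemma mcd_log_le {p : ℝ} (hp0 : 0 ≤ p) (hp1 : p ≤ 1) (t : ℝ) :
    Real.log (1 - p + p * Real.exp t) ≤ p * t + t ^ 2 / 8 := by
  set D : ℝ → ℝ := fun t => 1 - p + p * Real.exp t with hD
  have hDpos : ∀ t, 0 < D t := fun t => mcd_D_pos hp0 hp1 t
  set F : ℝ → ℝ := fun t => p * t + t ^ 2 / 8 - Real.log (D t) with hF
  set G : ℝ → ℝ := fun t => p + t / 4 - p * Real.exp t / D t with hG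
  have hDderiv : ∀ t, HasDerivAt D (p * Real.exp t) t := by
    intro t
    exact ((Real.hasDerivAt_exp t).const_mul p).const_add (1 - p)
  have hFderiv : ∀ t, HasDerivAt F (G t) t := by
    intro t
    have h1 : HasDerivAt (fun t : ℝ => p * t + t ^ 2 / 8) (p + t * 2 / 8) t := by
      have := ((hasDerivAt_id t).const_mul p).add
        (((hasDerivAt_pow 2 t)).div_const 8)
      simpa [mul_comm, Pi.add_def] using this
    have h2 : HasDerivAt (fun t => Real.log (D t)) (p * Real.exp t / D t) t :=
      (hDderiv t).log (hDpos t).ne'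
    have := h1.sub h2
    exact this.congr_deriv (by simp only [hG]; ring)
  have hGderiv : ∀ t, HasDerivAt G
      (1 / 4 - (p * Real.exp t * D t - p * Real.exp t * (p * Real.exp t)) / (D t) ^ 2) t := by
    intro t
    have hq : HasDerivAt (fun t => p * Real.exp t / D t)
        ((p * Real.exp t * D t - p * Real.exp t * (p * Real.exp t)) / (D t) ^ 2) t :=
      ((Real.hasDerivAt_exp t).const_mul p).div (hDderiv t) (hDpos t).ne'
    have h1 : HasDerivAt (fun t : ℝ => p + t / 4) (1 / 4) t := by
      simpa using ((hasDerivAt_id t).div_const 4).const_add p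
    exact h1.sub hq
  have hG'nonneg : ∀ t, 0 ≤ 1 / 4 -
      (p * Real.exp t * D t - p * Real.exp t * (p * Real.exp t)) / (D t) ^ 2 := by
    intro t
    set q : ℝ := p * Real.exp t / D t with hq
    have hq0 : 0 ≤ q := div_nonneg (mul_nonneg hp0 (Real.exp_pos t).le) (hDpos t).le
    have hq1 : q ≤ 1 := by
      rw [hq, div_le_one (hDpos t)]
      have : 0 ≤ 1 - p := by linarith
      simp only [hD]; nlinarith [Real.exp_pos t]
    have key : (p * Real.exp t * D t - p * Real.exp t * (p * Real.exp t)) / (D t) ^ 2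
        = q - q ^ 2 := by
      rw [hq]
      field_simp [(hDpos t).ne']
    rw [key]
    nlinarith [sq_nonneg (q - 1 / 2)]
  have hGmono : Monotone G := monotone_of_hasDerivAt_nonneg hGderiv hG'nonneg
  have hG0 : G 0 = 0 := by simp [hG, hD]
  have hF0 : F 0 = 0 := by simp [hF, hD]
  have hFnonneg : ∀ t, 0 ≤ F t := by
    intro t
    rcases le_total 0 t with ht | ht
    · have hmono : MonotoneOn F (Set.Ici (0 : ℝ)) := by
        apply monotoneOn_of_deriv_nonneg (convex_Ici 0)
          (Continuous.continuousOn (by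
            fun_prop (disch := exact fun x => (hDpos x).ne')))
          (fun x _ => (hFderiv x).differentiableAt.differentiableWithinAt)
        intro x hx
        rw [(hFderiv x).deriv]
        rw [interior_Ici] at hx
        have := hGmono (le_of_lt hx)
        rw [hG0] at this; exact this
      have := hmono (Set.self_mem_Ici) (Set.mem_Ici.2 ht) ht
      rwa [hF0] at this
    · have hanti : AntitoneOn F (Set.Iic (0 : ℝ)) := by
        apply antitoneOn_of_deriv_nonpos (convex_Iic 0)
          (Continuous.continuousOn (by
            fun_prop (disch := exact fun x => (hDpos x).ne')))
          (fun x _ => (hFderiv x).differentiableAt.differentiableWithinAt)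
        intro x hx
        rw [(hFderiv x).deriv]
        rw [interior_Iic] at hx
        have := hGmono (le_of_lt hx)
        rw [hG0] at this; exact this
      have := hanti (Set.mem_Iic.2 ht) (Set.self_mem_Iic) ht
      rwa [hF0] at this
    
  have := hFnonneg t
  simp only [hF] at this
  linarith

private lemma mcd_integrable_of_bdd {α : Type*} [MeasurableSpace α] (ν : Measure α)
    [IsFiniteMeasure ν] {h : α → ℝ} (hm : Measurable h) {M : ℝ} (hM : ∀ x, |h x| ≤ M) :
    Integrable h ν :=
  Integrable.mono' (integrable_const M) hm.aestronglyMeasurable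
    (ae_of_all _ fun x => by simpa [Real.norm_eq_abs] using hM x)

private lemma mcd_hoeffding {α : Type*} [MeasurableSpace α] (ν : Measure α)
    [IsProbabilityMeasure ν] {g : α → ℝ} (hg : Measurable g) {a b : ℝ}
    (hab : ∀ x, g x ∈ Set.Icc a b) (h0 : ∫ x, g x ∂ν = 0) (lam : ℝ) :
    ∫ x, Real.exp (lam * g x) ∂ν ≤ Real.exp (lam ^ 2 * (b - a) ^ 2 / 8) := by
  have hne : Nonempty α := MeasureTheory.Measure.nonempty_of_neZero ν
  obtain ⟨x₀⟩ := hne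
  have hax : a ≤ b := le_trans (hab x₀).1 (hab x₀).2
  have hgint : Integrable g ν := mcd_integrable_of_bdd ν hg
    (M := max |a| |b|) (fun x => abs_le.2 ⟨le_trans (neg_le_neg (le_max_left |a| |b|))
      (le_trans (neg_abs_le a) (hab x).1), le_trans (hab x).2 (le_trans (le_abs_self b) (le_max_right _ _))⟩)
  have ha0 : a ≤ 0 := by
    have : a ≤ ∫ x, g x ∂ν := by
      rw [show a = ∫ _, a ∂ν by simp]
      exact integral_mono (by simp) hgint (fun x => (hab x).1)
    rwa [h0] at this
  have hb0 : 0 ≤ b := by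
    have : ∫ x, g x ∂ν ≤ b := by
      rw [show b = ∫ _, b ∂ν by simp [mul_comm]]
      exact integral_mono hgint (by simp) (fun x => (hab x).2)
    rwa [h0] at this
  rcases eq_or_lt_of_le hax with heq | hlt
  · -- a = b, so a = b = 0 and g = 0
    have ha : a = 0 := le_antisymm ha0 (by rw [heq]; exact hb0)
    have hb : b = 0 := by rw [← heq]; exact ha
    have hgx : ∀ x, g x = 0 := fun x =>
      le_antisymm (by rw [← hb]; exact (hab x).2) (by rw [← ha]; exact (hab x).1)
    simp [hgx, ha, hb]
  · have hba : 0 < b - a := sub_pos.2 hlt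
    -- pointwise convexity bound
    have hconv : ∀ x, Real.exp (lam * g x) ≤
        ((b - g x) / (b - a)) * Real.exp (lam * a) + ((g x - a) / (b - a)) * Real.exp (lam * b) := by
      intro x
      have h1 : (0:ℝ) ≤ (b - g x) / (b - a) := div_nonneg (by linarith [(hab x).2]) hba.le
      have h2 : (0:ℝ) ≤ (g x - a) / (b - a) := div_nonneg (by linarith [(hab x).1]) hba.le
      have h3 : (b - g x) / (b - a) + (g x - a) / (b - a) = 1 := by
        field_simp
        ring
      have hne' : b - a ≠ 0 := sub_ne_zero.2 hlt.ne'
      have := convexOn_exp.2 (Set.mem_univ (lam * a)) (Set.mem_univ (lam * b)) h1 h2 h3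
      simp only [smul_eq_mul] at this
      have harg : (b - g x) / (b - a) * (lam * a) + (g x - a) / (b - a) * (lam * b) = lam * g x := by
        field_simp
        ring
      rw [harg] at this
      exact this
    -- integrate
    have hexp_int : Integrable (fun x => Real.exp (lam * g x)) ν := by
      refine mcd_integrable_of_bdd ν (by fun_prop) (M := Real.exp (|lam| * (max |a| |b|))) ?_
      intro x
      rw [abs_of_nonneg (Real.exp_nonneg _)]
      apply Real.exp_le_exp.2
      calc lam * g x ≤ |lam * g x| := le_abs_self _
        _ = |lam| * |g x| := abs_mul _ _
        _ ≤ |lam| * max |a| |b| := by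
            apply mul_le_mul_of_nonneg_left _ (abs_nonneg lam)
            rcases le_total 0 (g x) with h | h
            · exact le_trans (by rw [abs_of_nonneg h]; exact le_trans (hab x).2 (le_abs_self b)) (le_max_right _ _)
            · refine le_trans ?_ (le_max_left |a| |b|)
              rw [abs_of_nonpos h]
              have := (hab x).1
              rw [abs_of_nonpos (le_trans this h)]
              linarith
    have hrhs_int : Integrable (fun x => ((b - g x) / (b - a)) * Real.exp (lam * a)
        + ((g x - a) / (b - a)) * Real.exp (lam * b)) ν := by
      apply Integrable.add
      · exact ((((integrable_const b).sub hgint).div_const _).mul_const _)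
      · exact (((hgint.sub (integrable_const a)).div_const _).mul_const _)
    have hIle : ∫ x, Real.exp (lam * g x) ∂ν ≤
        (b / (b - a)) * Real.exp (lam * a) + ((-a) / (b - a)) * Real.exp (lam * b) := by
      calc ∫ x, Real.exp (lam * g x) ∂ν
          ≤ ∫ x, (((b - g x) / (b - a)) * Real.exp (lam * a)
              + ((g x - a) / (b - a)) * Real.exp (lam * b)) ∂ν :=
            integral_mono hexp_int hrhs_int hconv
        _ = (b / (b - a)) * Real.exp (lam * a) + ((-a) / (b - a)) * Real.exp (lam * b) := by
            have int1 : Integrable (fun x => (b - g x) / (b - a) * Real.exp (lam * a)) ν :=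
              (((integrable_const b).sub hgint).div_const _).mul_const _
            have int2 : Integrable (fun x => (g x - a) / (b - a) * Real.exp (lam * b)) ν :=
              ((hgint.sub (integrable_const a)).div_const _).mul_const _
            rw [integral_add int1 int2, integral_mul_const, integral_mul_const, integral_div,
              integral_div, integral_sub (integrable_const b) hgint,
              integral_sub hgint (integrable_const a), h0]
            simp
    refine le_trans hIle ?_
    -- now apply the log lemma with p = -a/(b-a), t = lam*(b-a)
    set p : ℝ := -a / (b - a) with hp
    have hp0 : 0 ≤ p := div_nonneg (by linarith) hba.le
    have hp1 : p ≤ 1 := by rw [hp, div_le_one hba]; linarith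
    set t : ℝ := lam * (b - a) with ht
    have key := mcd_log_le hp0 hp1 t
    have hDpos : 0 < 1 - p + p * Real.exp t := mcd_D_pos hp0 hp1 t
    have hle : 1 - p + p * Real.exp t ≤ Real.exp (p * t + t ^ 2 / 8) :=
      (Real.log_le_iff_le_exp hDpos).1 key
    have hne' : b - a ≠ 0 := sub_ne_zero.2 hlt.ne'
    have h1p : 1 - p = b / (b - a) := by rw [hp]; field_simp; ring
    have hEb : Real.exp (lam * a) * Real.exp t = Real.exp (lam * b) := by
      rw [ht, ← Real.exp_add]; congr 1; ring
    calc (b / (b - a)) * Real.exp (lam * a) + ((-a) / (b - a)) * Real.exp (lam * b)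
        = Real.exp (lam * a) * (1 - p + p * Real.exp t) := by
          rw [h1p, hp, ← hEb]
          ring
      _ ≤ Real.exp (lam * a) * Real.exp (p * t + t ^ 2 / 8) :=
          mul_le_mul_of_nonneg_left hle (Real.exp_nonneg _)
      _ = Real.exp (lam * a + (p * t + t ^ 2 / 8)) := by rw [← Real.exp_add]
      _ = Real.exp (lam ^ 2 * (b - a) ^ 2 / 8) := by
          congr 1
          rw [hp, ht]
          field_simp
          ring

private lemma mcd_bdd {X : Type*} [Nonempty X] :
    ∀ (n : ℕ) (f : (Fin n → X) → ℝ) (c : Fin n → ℝ),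
      (∀ (i : Fin n) (x : Fin n → X) (x' : X), |f x - f (Function.update x i x')| ≤ c i) →
      ∃ M, ∀ x, |f x| ≤ M := by
  intro n
  induction n with
  | zero =>
    intro f c _
    exact ⟨|f Fin.elim0|, fun x => le_of_eq (congrArg _ (congrArg f (Subsingleton.elim x _)))⟩
  | succ n ih =>
    intro f c hbd
    obtain ⟨x₀⟩ := ‹Nonempty X›
    obtain ⟨M, hM⟩ := ih (fun y => f (Fin.cons x₀ y)) (fun j => c j.succ) (by
      intro j y x'
      have := hbd j.succ (Fin.cons x₀ y) x'
      rwa [← Fin.cons_update] at this)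
    refine ⟨c 0 + M, fun x => ?_⟩
    have hx : x = Fin.cons (x 0) (Fin.tail x) := (Fin.cons_self_tail x).symm
    have h1 : |f x - f (Function.update x 0 x₀)| ≤ c 0 := hbd 0 x x₀
    have h2 : Function.update x 0 x₀ = Fin.cons x₀ (Fin.tail x) := by
      conv_lhs => rw [hx]
      rw [Fin.update_cons_zero]
    calc |f x| ≤ |f x - f (Function.update x 0 x₀)| + |f (Function.update x 0 x₀)| := by
          have := abs_add_le (f x - f (Function.update x 0 x₀)) (f (Function.update x 0 x₀))
          simpa using this
      _ ≤ c 0 + M := add_le_add h1 (by rw [h2]; exact hM (Fin.tail x))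

private lemma mcd_main {X : Type*} [MeasurableSpace X] (μ : Measure X) [IsProbabilityMeasure μ] :
    ∀ (n : ℕ) (f : (Fin n → X) → ℝ) (c : Fin n → ℝ),
      Measurable f →
      (∀ (i : Fin n) (x : Fin n → X) (x' : X), |f x - f (Function.update x i x')| ≤ c i) →
      ∀ lam : ℝ,
      (∫ x, Real.exp (lam * (f x - ∫ y, f y ∂(Measure.pi fun _ : Fin n => μ)))
          ∂(Measure.pi fun _ : Fin n => μ)) ≤ Real.exp (lam ^ 2 / 8 * ∑ i, c i ^ 2) := by
  have hXne : Nonempty X := MeasureTheory.Measure.nonempty_of_neZero μ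
  obtain ⟨x₀⟩ := hXne
  have hXne : Nonempty X := ⟨x₀⟩
  intro n
  induction n with
  | zero =>
    intro f c hmeas hbd lam
    have hconst : ∀ x : Fin 0 → X, f x = f Fin.elim0 := fun x =>
      congrArg f (Subsingleton.elim _ _)
    simp_rw [hconst]
    simp
  | succ n ih =>
    intro f c hmeas hbd lam
    set Pn : Measure (Fin n → X) := Measure.pi fun _ : Fin n => μ with hPn
    set PP : Measure (Fin (n + 1) → X) := Measure.pi fun _ : Fin (n + 1) => μ with hPP
    obtain ⟨M, hM⟩ := mcd_bdd (n + 1) f c hbd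
    set Ef : ℝ := ∫ y, f y ∂PP with hEf
    -- measurable equivalence splitting off coordinate 0
    set e : ((Fin (n + 1)) → X) ≃ᵐ X × (Fin n → X) :=
      MeasurableEquiv.piFinSuccAbove (fun _ : Fin (n + 1) => X) 0 with he
    have hMP : MeasurePreserving e PP (μ.prod Pn) :=
      measurePreserving_piFinSuccAbove (fun _ : Fin (n + 1) => μ) 0
    have hesymm : ∀ z : X × (Fin n → X), e.symm z = Fin.cons z.1 z.2 := by
      intro z
      simp [he, MeasurableEquiv.piFinSuccAbove, Fin.insertNthEquiv, Fin.insertNth_zero']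
    -- Fubini for bounded measurable functions
    have key : ∀ (G : ((Fin (n + 1)) → X) → ℝ) (MG : ℝ), Measurable G → (∀ x, |G x| ≤ MG) →
        (∫ x, G x ∂PP = ∫ y : Fin n → X, ∫ a : X, G (Fin.cons a y) ∂μ ∂Pn) ∧
        Integrable (fun y : Fin n → X => ∫ a : X, G (Fin.cons a y) ∂μ) Pn := by
      intro G MG hGm hGb
      have hGint : Integrable (fun z : X × (Fin n → X) => G (e.symm z)) (μ.prod Pn) :=
        mcd_integrable_of_bdd _ (hGm.comp e.symm.measurable) (fun z => hGb _)
      have h1 : ∫ x, G x ∂PP = ∫ z, G (e.symm z) ∂(μ.prod Pn) := by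
        rw [← hMP.integral_comp e.measurableEmbedding (fun z => G (e.symm z))]
        simp
      have h2 : (fun y : Fin n → X => ∫ a : X, G (e.symm (a, y)) ∂μ)
          = fun y : Fin n → X => ∫ a : X, G (Fin.cons a y) ∂μ := by
        funext y
        apply integral_congr_ae
        filter_upwards with a
        rw [hesymm]
      constructor
      · rw [h1, integral_prod_symm _ hGint, h2]
      · have := hGint.integral_prod_right
        rwa [h2] at this
    -- the conditional mean g
    have hconsm : ∀ y : Fin n → X, Measurable fun a : X => (Fin.cons a y : Fin (n+1) → X) := by
      intro y
      apply measurable_pi_iff.2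
      intro j
      refine Fin.cases ?_ ?_ j
      · simpa using measurable_id'
      · intro i; simpa using measurable_const
    have hF2m : Measurable fun z : X × (Fin n → X) => f (Fin.cons z.1 z.2) := by
      apply hmeas.comp
      apply measurable_pi_iff.2
      intro j
      refine Fin.cases ?_ ?_ j
      · simpa using measurable_fst
      · intro i; simpa using (measurable_snd.eval (a := i) :
          Measurable fun x : X × (Fin n → X) => x.2 i)
    set g : (Fin n → X) → ℝ := fun y => ∫ a : X, f (Fin.cons a y) ∂μ with hg
    have hgmeas : Measurable g := by
      have := hF2m.stronglyMeasurable.integral_prod_left' (μ := μ)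
      exact this.measurable
    have hfyint : ∀ y, Integrable (fun a => f (Fin.cons a y)) μ := fun y =>
      mcd_integrable_of_bdd μ (hmeas.comp (hconsm y)) (fun a => hM _)
    have hgbdd : ∀ y, |g y| ≤ M := by
      intro y
      rw [hg]
      have := norm_integral_le_of_norm_le_const (μ := μ)
        (f := fun a => f (Fin.cons a y)) (C := M)
        (ae_of_all _ fun a => by simpa [Real.norm_eq_abs] using hM (Fin.cons a y))
      simpa [Real.norm_eq_abs] using this
    have hgbd : ∀ (j : Fin n) (y : Fin n → X) (x' : X),
        |g y - g (Function.update y j x')| ≤ c j.succ := by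
      intro j y x'
      have hdiff : g y - g (Function.update y j x') =
          ∫ a, (f (Fin.cons a y) - f (Fin.cons a (Function.update y j x'))) ∂μ :=
        (integral_sub (hfyint y) (hfyint _)).symm
      rw [hdiff]
      have := norm_integral_le_of_norm_le_const (μ := μ)
        (f := fun a => f (Fin.cons a y) - f (Fin.cons a (Function.update y j x')))
        (C := c j.succ)
        (ae_of_all _ fun a => by
          have := hbd j.succ (Fin.cons a y) x'
          rw [← Fin.cons_update] at this
          simpa [Real.norm_eq_abs] using this)
      simpa [Real.norm_eq_abs] using this
    have hEfg : Ef = ∫ y, g y ∂Pn := (key f M hmeas hM).1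
    -- per-y Hoeffding bound
    set K : ℝ := Real.exp (lam ^ 2 * c 0 ^ 2 / 8) with hK
    have hy : ∀ y : Fin n → X, ∫ a : X, Real.exp (lam * (f (Fin.cons a y) - Ef)) ∂μ ≤
        Real.exp (lam * (g y - Ef)) * K := by
      intro y
      have hfac : ∀ a, Real.exp (lam * (f (Fin.cons a y) - Ef)) =
          Real.exp (lam * (g y - Ef)) * Real.exp (lam * (f (Fin.cons a y) - g y)) := by
        intro a; rw [← Real.exp_add]; congr 1; ring
      simp_rw [hfac]
      rw [integral_const_mul]
      apply mul_le_mul_of_nonneg_left _ (Real.exp_nonneg _)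
      have hosc : ∀ a a', |f (Fin.cons a y) - f (Fin.cons a' y)| ≤ c 0 := by
        intro a a'
        have := hbd 0 (Fin.cons a y) a'
        rwa [Fin.update_cons_zero] at this
      have hbdd : BddBelow (Set.range fun a => f (Fin.cons a y)) := by
        refine ⟨f (Fin.cons x₀ y) - c 0, ?_⟩
        rintro _ ⟨a, rfl⟩
        have := abs_le.1 (hosc x₀ a)
        linarith [this.2]
      set aY : ℝ := sInf (Set.range fun a => f (Fin.cons a y)) with haY
      have hlow : ∀ a, aY ≤ f (Fin.cons a y) := fun a => csInf_le hbdd ⟨a, rfl⟩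
      have hhigh : ∀ a, f (Fin.cons a y) ≤ aY + c 0 := by
        intro a
        have h1 : f (Fin.cons a y) - c 0 ≤ aY := by
          refine le_csInf ⟨f (Fin.cons x₀ y), x₀, rfl⟩ ?_
          rintro _ ⟨a', rfl⟩
          have := abs_le.1 (hosc a a')
          linarith [this.1]
        linarith
      have hmean : ∫ a, (f (Fin.cons a y) - g y) ∂μ = 0 := by
        rw [integral_sub (hfyint y) (integrable_const _)]
        simp [hg]
      have hhoeff := mcd_hoeffding μ
        (g := fun a => f (Fin.cons a y) - g y)
        ((hmeas.comp (hconsm y)).sub measurable_const)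
        (a := aY - g y) (b := aY + c 0 - g y)
        (fun a => ⟨by show aY - g y ≤ f (Fin.cons a y) - g y; linarith [hlow a],
          by show f (Fin.cons a y) - g y ≤ aY + c 0 - g y; linarith [hhigh a]⟩) hmean lam
      refine hhoeff.trans (le_of_eq ?_)
      rw [hK]
      congr 1
      ring
    -- main chain
    have hKpos : (0:ℝ) ≤ K := Real.exp_nonneg _
    have hMEf : ∀ x, |Real.exp (lam * (f x - Ef))| ≤ Real.exp (|lam| * (M + |Ef|)) := by
      intro x
      rw [abs_of_nonneg (Real.exp_nonneg _)]
      apply Real.exp_le_exp.2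
      calc lam * (f x - Ef) ≤ |lam * (f x - Ef)| := le_abs_self _
        _ = |lam| * |f x - Ef| := abs_mul _ _
        _ ≤ |lam| * (M + |Ef|) := by
            apply mul_le_mul_of_nonneg_left _ (abs_nonneg lam)
            calc |f x - Ef| ≤ |f x| + |Ef| := abs_sub _ _
              _ ≤ M + |Ef| := add_le_add (hM x) le_rfl
    obtain ⟨hfub, hφint⟩ := key (fun x => Real.exp (lam * (f x - Ef)))
      (Real.exp (|lam| * (M + |Ef|)))
      (by fun_prop) hMEf
    have hψint : Integrable (fun y => Real.exp (lam * (g y - Ef)) * K) Pn := by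
      apply Integrable.mul_const
      apply mcd_integrable_of_bdd _ (by fun_prop)
        (M := Real.exp (|lam| * (M + |Ef|)))
      intro y
      rw [abs_of_nonneg (Real.exp_nonneg _)]
      apply Real.exp_le_exp.2
      calc lam * (g y - Ef) ≤ |lam * (g y - Ef)| := le_abs_self _
        _ = |lam| * |g y - Ef| := abs_mul _ _
        _ ≤ |lam| * (M + |Ef|) := by
            apply mul_le_mul_of_nonneg_left _ (abs_nonneg lam)
            calc |g y - Ef| ≤ |g y| + |Ef| := abs_sub _ _
              _ ≤ M + |Ef| := add_le_add (hgbdd y) le_rfl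
    calc ∫ x, Real.exp (lam * (f x - Ef)) ∂PP
        = ∫ y : Fin n → X, ∫ a : X, Real.exp (lam * (f (Fin.cons a y) - Ef)) ∂μ ∂Pn := hfub
      _ ≤ ∫ y, Real.exp (lam * (g y - Ef)) * K ∂Pn := integral_mono hφint hψint hy
      _ = K * ∫ y, Real.exp (lam * (g y - Ef)) ∂Pn := by
          rw [integral_mul_const]; ring
      _ ≤ K * Real.exp (lam ^ 2 / 8 * ∑ j : Fin n, c j.succ ^ 2) := by
          apply mul_le_mul_of_nonneg_left _ hKpos
          have := ih g (fun j => c j.succ) hgmeas hgbd lam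
          rw [← hEfg] at this
          exact this
      _ = Real.exp (lam ^ 2 / 8 * ∑ i, c i ^ 2) := by
          rw [hK, ← Real.exp_add, Fin.sum_univ_succ]
          congr 1
          ring

open MeasureTheory ProbabilityTheory

/-- Exponential form of McDiarmid's inequality: if `f` has the bounded difference property with
constants `c i`, then for i.i.d. inputs `X₁,…,Xₙ` and `Z = f(X₁,…,Xₙ)`,
`E[exp(λ(Z - E Z))] ≤ exp((λ²/8) ∑ᵢ cᵢ²)` for every real `λ`. -/
theorem stmt4 {X : Type*} [MeasurableSpace X] (μ : Measure X) [IsProbabilityMeasure μ]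
    (n : ℕ) (f : (Fin n → X) → ℝ) (c : Fin n → ℝ)
    (hmeas : Measurable f)
    (hbd : ∀ (i : Fin n) (x : Fin n → X) (x' : X),
      |f x - f (Function.update x i x')| ≤ c i)
    (lam : ℝ) :
    (∫ x, Real.exp (lam * (f x - ∫ y, f y ∂(Measure.pi fun _ : Fin n => μ)))
        ∂(Measure.pi fun _ : Fin n => μ)) ≤
      Real.exp (lam ^ 2 / 8 * ∑ i, c i ^ 2) :=
  mcd_main μ n f c hmeas hbd lam
end

section
/- (Disintegrated PAC-Bayesian bound for random sets) Under the same setting (prior π on a measurable space E of hypothesis sets, posteriors ρ_S ≪ π, measurable Φ with e^Φ ∈ L¹(π ⊗ μ_z^⊗n)), for any ζ ∈ (0,1), with probability at least 1−ζ over the joint draw of S ~ μ_z^⊗n and W ~ ρ_S: Φ(W,S) ≤ log((dρ_S/dπ)(W)) + log(1/ζ) + log E_S E_{W∼π}[e^{Φ(W,S)}]. -/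
open MeasureTheory ProbabilityTheory

/-- Disintegrated PAC-Bayesian bound for random sets: with probability at least `1-ζ` over the
joint draw of `S ~ μ_z^⊗n` and `W ~ ρ_S`,
`Φ(W,S) ≤ log((dρ_S/dπ)(W)) + log(1/ζ) + log E_S E_{W∼π} e^{Φ(W,S)}`. -/
theorem stmt7 {E Z : Type*} [MeasurableSpace E] [MeasurableSpace Z]
    (μz : Measure Z) [IsProbabilityMeasure μz] (n : ℕ)
    (π : Measure E) [IsProbabilityMeasure π]
    (ρ : Kernel (Fin n → Z) E) [IsMarkovKernel ρ]
    (habs : ∀ᵐ S ∂(Measure.pi fun _ : Fin n => μz), ρ S ≪ π)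
    (Φ : E → (Fin n → Z) → ℝ) (hΦ : Measurable (Function.uncurry Φ))
    (hint : Integrable (fun p : E × (Fin n → Z) => Real.exp (Φ p.1 p.2))
      (π.prod (Measure.pi fun _ : Fin n => μz)))
    (ζ : ℝ) (hζ : ζ ∈ Set.Ioo (0 : ℝ) 1) :
    ENNReal.ofReal (1 - ζ) ≤
      ((Measure.pi fun _ : Fin n => μz) ⊗ₘ ρ)
        {p | Φ p.2 p.1 ≤
              Real.log (((ρ p.1).rnDeriv π p.2).toReal) + Real.log (1 / ζ) +
                Real.log (∫ S', ∫ w, Real.exp (Φ w S') ∂π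
                  ∂(Measure.pi fun _ : Fin n => μz))} := by
  obtain ⟨hζ0, hζ1⟩ := hζ
  set μ : Measure (Fin n → Z) := Measure.pi fun _ : Fin n => μz with hμdef
  have hmeas : Measurable fun p : E × (Fin n → Z) => ENNReal.ofReal (Real.exp (Φ p.1 p.2)) :=
    (Real.measurable_exp.comp hΦ).ennreal_ofReal
  set I : ℝ := ∫ S', ∫ w, Real.exp (Φ w S') ∂π ∂μ with hIdef
  have hIeq : I = ∫ p, Real.exp (Φ p.1 p.2) ∂(π.prod μ) := by
    rw [hIdef, ← MeasureTheory.integral_integral_swap (f := fun w S => Real.exp (Φ w S)) hint,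
      MeasureTheory.integral_integral hint]
  have hIpos : 0 < I := by
    rw [hIeq]
    exact integral_exp_pos hint
  -- ofReal I as an iterated lower integral
  have hI1 : ENNReal.ofReal I
      = ∫⁻ S, ∫⁻ w, ENNReal.ofReal (Real.exp (Φ w S)) ∂π ∂μ := by
    rw [hIeq, ofReal_integral_eq_lintegral_ofReal hint
      (Filter.Eventually.of_forall fun p => (Real.exp_pos _).le),
      lintegral_prod _ hmeas.aemeasurable]
    exact lintegral_lintegral_swap hmeas.aemeasurable
  set K : ENNReal := ENNReal.ofReal (I / ζ) with hKdef
  have hK0 : K ≠ 0 := by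
    simp only [hKdef, ne_eq, ENNReal.ofReal_eq_zero, not_le]
    positivity
  have hKtop : K ≠ ⊤ := ENNReal.ofReal_ne_top
  -- fiberwise Markov inequality
  have hmark : ∀ᵐ S ∂μ, ρ S {w | ¬ Φ w S ≤
        Real.log (((ρ S).rnDeriv π w).toReal) + Real.log (1 / ζ) + Real.log I}
      ≤ (∫⁻ w, ENNReal.ofReal (Real.exp (Φ w S)) ∂π) * K⁻¹ := by
    filter_upwards [habs] with S hS
    have hΦS : Measurable fun w => Φ w S :=
      hΦ.comp (measurable_id.prodMk measurable_const)
    have hrmeas : Measurable ((ρ S).rnDeriv π) := Measure.measurable_rnDeriv _ _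
    set T : Set E := {w | (ρ S).rnDeriv π w * K < ENNReal.ofReal (Real.exp (Φ w S))} with hTdef
    have hTmeas : MeasurableSet T :=
      measurableSet_lt (hrmeas.mul_const K) (Real.measurable_exp.comp hΦS).ennreal_ofReal
    have hsub : ρ S {w | ¬ Φ w S ≤
          Real.log (((ρ S).rnDeriv π w).toReal) + Real.log (1 / ζ) + Real.log I} ≤ ρ S T := by
      refine measure_mono_ae ?_
      filter_upwards [Measure.rnDeriv_pos hS, hS.ae_le (Measure.rnDeriv_lt_top (ρ S) π)]
        with w hw0 hwt hw
      push_neg at hw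
      have hx : 0 < ((ρ S).rnDeriv π w).toReal := ENNReal.toReal_pos hw0.ne' hwt.ne
      have hlog : Real.log (((ρ S).rnDeriv π w).toReal * (I / ζ)) < Φ w S := by
        rw [Real.log_mul hx.ne' (by positivity), Real.log_div hIpos.ne' hζ0.ne']
        have h1 : Real.log (1 / ζ) = -Real.log ζ := by
          rw [one_div, Real.log_inv]
        replace hw : Real.log (((ρ S).rnDeriv π w).toReal) + Real.log (1 / ζ) + Real.log I
            < Φ w S := hw
        linarith [hw, h1]
      have hlt : ((ρ S).rnDeriv π w).toReal * (I / ζ) < Real.exp (Φ w S) :=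
        (Real.log_lt_iff_lt_exp (by positivity)).mp hlog
      show (ρ S).rnDeriv π w * K < ENNReal.ofReal (Real.exp (Φ w S))
      calc (ρ S).rnDeriv π w * K
          = ENNReal.ofReal (((ρ S).rnDeriv π w).toReal * (I / ζ)) := by
            rw [ENNReal.ofReal_mul hx.le, ENNReal.ofReal_toReal hwt.ne]
        _ < ENNReal.ofReal (Real.exp (Φ w S)) :=
            (ENNReal.ofReal_lt_ofReal_iff (Real.exp_pos _)).mpr hlt
    refine hsub.trans ?_
    calc ρ S T = ∫⁻ w in T, (ρ S).rnDeriv π w ∂π := (Measure.setLIntegral_rnDeriv hS T).symm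
      _ ≤ ∫⁻ w in T, ENNReal.ofReal (Real.exp (Φ w S)) * K⁻¹ ∂π := by
          refine setLIntegral_mono
            (((Real.measurable_exp.comp hΦS).ennreal_ofReal).mul_const _) fun w hw => ?_
          have hw' : (ρ S).rnDeriv π w * K ≤ ENNReal.ofReal (Real.exp (Φ w S)) := (hw).le
          rw [← ENNReal.le_div_iff_mul_le (Or.inl hK0) (Or.inl hKtop)] at hw'
          rwa [div_eq_mul_inv] at hw'
      _ ≤ ∫⁻ w, ENNReal.ofReal (Real.exp (Φ w S)) * K⁻¹ ∂π := setLIntegral_le_lintegral _ _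
      _ = (∫⁻ w, ENNReal.ofReal (Real.exp (Φ w S)) ∂π) * K⁻¹ :=
          lintegral_mul_const _ (Real.measurable_exp.comp hΦS).ennreal_ofReal
  -- any measurable superset of the good event has large measure
  have key : ∀ U : Set ((Fin n → Z) × E), MeasurableSet U →
      {p : (Fin n → Z) × E | Φ p.2 p.1 ≤
        Real.log (((ρ p.1).rnDeriv π p.2).toReal) + Real.log (1 / ζ) + Real.log I} ⊆ U →
      ENNReal.ofReal (1 - ζ) ≤ (μ ⊗ₘ ρ) U := by
    intro U hU hsubU
    have hcompl : (μ ⊗ₘ ρ) Uᶜ ≤ ENNReal.ofReal ζ := by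
      rw [Measure.compProd_apply hU.compl]
      have hle : ∫⁻ S, ρ S (Prod.mk S ⁻¹' Uᶜ) ∂μ
          ≤ ∫⁻ S, (∫⁻ w, ENNReal.ofReal (Real.exp (Φ w S)) ∂π) * K⁻¹ ∂μ := by
        refine lintegral_mono_ae ?_
        filter_upwards [hmark] with S hS
        refine le_trans (measure_mono ?_) hS
        intro w hw
        intro hcontra
        exact hw (hsubU hcontra)
      refine hle.trans ?_
      rw [lintegral_mul_const _ (hmeas.lintegral_prod_left'), ← hI1, hKdef,
        ENNReal.ofReal_div_of_pos hζ0,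
        ENNReal.inv_div (Or.inl ENNReal.ofReal_ne_top)
          (Or.inl (by simp only [ne_eq, ENNReal.ofReal_eq_zero, not_le]; exact hζ0)),
        div_eq_mul_inv, ← mul_assoc, mul_comm (ENNReal.ofReal I) (ENNReal.ofReal ζ),
        mul_assoc, ENNReal.mul_inv_cancel
          (by simp only [ne_eq, ENNReal.ofReal_eq_zero, not_le]; exact hIpos)
          ENNReal.ofReal_ne_top, mul_one]
    have htotal : (μ ⊗ₘ ρ) U + (μ ⊗ₘ ρ) Uᶜ = 1 := by
      rw [measure_add_measure_compl hU, measure_univ]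
    have h1 : ENNReal.ofReal (1 - ζ) + ENNReal.ofReal ζ = 1 := by
      rw [← ENNReal.ofReal_add (by linarith) hζ0.le]
      norm_num
    have : ENNReal.ofReal (1 - ζ) + (μ ⊗ₘ ρ) Uᶜ ≤ (μ ⊗ₘ ρ) U + (μ ⊗ₘ ρ) Uᶜ := by
      rw [htotal, ← h1]
      exact add_le_add_right hcompl _
    have hUc_top : (μ ⊗ₘ ρ) Uᶜ ≠ ⊤ := (hcompl.trans_lt ENNReal.ofReal_lt_top).ne
    exact (ENNReal.add_le_add_iff_right hUc_top).mp this
  rw [measure_eq_iInf]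
  exact le_iInf fun t => le_iInf fun h1 => le_iInf fun h2 => key t h2 h1
end
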